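/- The canonical projection π̂ : D_H → H* defined by π̂(f ⊗ x) = ε(f) x is a bialgebra homomorphism onto (H*)^cop: π̂ is a unital algebra homomorphism from the tensor product algebra D_H = H ⊗ H* to the convolution algebra H*, and it satisfies (π̂ ⊗ π̂) ∘ Δ_D = Δ̂ ∘ π̂ and ε̂ ∘ π̂ = ε_D, where ε̂(x) = x(1). -/

import Mathlib

open scoped TensorProduct

noncomputable section

variable (k H : Type*) [Field k] [Ring H] [HopfAlgebra k H]

/-- The convolution product on the linear dual `H*` of `H`, as a linear map
`H* ⊗ H* → H*`: it sends `x ⊗ y` to `a ↦ x(a_(1)) y(a_(2))`. -/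
def convL : Module.Dual k H ⊗[k] Module.Dual k H →ₗ[k] Module.Dual k H :=
  LinearMap.lcomp k k (Coalgebra.comul (R := k) (A := H)) ∘ₗ
    TensorProduct.dualDistrib k H H

/-- The multiplication of the tensor product algebra `D_H = H ⊗ H*`, where `H*` carries
the convolution product: `(f ⊗ x)(g ⊗ y) = fg ⊗ (x · y)`. -/
def mulD : (H ⊗[k] Module.Dual k H) ⊗[k] (H ⊗[k] Module.Dual k H) →ₗ[k]
    H ⊗[k] Module.Dual k H :=
  TensorProduct.map (LinearMap.mul' k H) (convL k H) ∘ₗ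
    (TensorProduct.tensorTensorTensorComm k H (Module.Dual k H) H
      (Module.Dual k H)).toLinearMap

/-- The unit `1 ⊗ ε` of the tensor product algebra `D_H = H ⊗ H*`. -/
def oneD : H ⊗[k] Module.Dual k H :=
  (1 : H) ⊗ₜ[k] (Coalgebra.counit (R := k) (A := H))

/-- The counit `ε_D(f ⊗ x) = ε(f) x(1)` of the Drinfeld codouble `D_H = H ⊗ H*`. -/
def epsD : H ⊗[k] Module.Dual k H →ₗ[k] k :=
  LinearMap.mul' k k ∘ₗ
    TensorProduct.map (Coalgebra.counit (R := k) (A := H))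
      (LinearMap.applyₗ (1 : H) : Module.Dual k H →ₗ[k] k)

variable {k H}

/-- The element `w = Σ_j e_j ⊗ e^j ∈ H ⊗ H*`. -/
def wElem {n : ℕ} (b : Module.Basis (Fin n) k H) : H ⊗[k] Module.Dual k H :=
  ∑ j : Fin n, b j ⊗ₜ[k] b.coord j

/-- The element `w⁻¹ = (S ⊗ id)(w) = Σ_j S(e_j) ⊗ e^j ∈ H ⊗ H*`. -/
def wElemInv {n : ℕ} (b : Module.Basis (Fin n) k H) : H ⊗[k] Module.Dual k H :=
  ∑ j : Fin n, HopfAlgebra.antipode (R := k) (b j) ⊗ₜ[k] b.coord j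

/-- Conjugation `Ad(w)(z) = w z w⁻¹` by `w` in the tensor product algebra `H ⊗ H*`. -/
def adW {n : ℕ} (b : Module.Basis (Fin n) k H) :
    H ⊗[k] Module.Dual k H →ₗ[k] H ⊗[k] Module.Dual k H :=
  mulD k H ∘ₗ
    TensorProduct.mk k (H ⊗[k] Module.Dual k H) (H ⊗[k] Module.Dual k H) (wElem b) ∘ₗ
    mulD k H ∘ₗ
    (TensorProduct.mk k (H ⊗[k] Module.Dual k H) (H ⊗[k] Module.Dual k H)).flip
      (wElemInv b)

/-- The comultiplication `Δ_D = (id ⊗ σ ⊗ id) ∘ (id ⊗ Ad(w) ⊗ id) ∘ (Δ ⊗ Δ̂)` of the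
Drinfeld codouble `D_H = H ⊗ H*`, where `Δ̂` is the comultiplication of `(H*)^cop` and
`σ` is the flip map. -/
def deltaD {n : ℕ} (b : Module.Basis (Fin n) k H)
    (Δhat : Module.Dual k H →ₗ[k] Module.Dual k H ⊗[k] Module.Dual k H) :
    H ⊗[k] Module.Dual k H →ₗ[k]
      (H ⊗[k] Module.Dual k H) ⊗[k] (H ⊗[k] Module.Dual k H) :=
  (TensorProduct.assoc k H (Module.Dual k H) (H ⊗[k] Module.Dual k H)).symm.toLinearMap ∘ₗ
    TensorProduct.map (LinearMap.id : H →ₗ[k] H)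
      (TensorProduct.assoc k (Module.Dual k H) H (Module.Dual k H)).toLinearMap ∘ₗ
    TensorProduct.map (LinearMap.id : H →ₗ[k] H)
      (TensorProduct.map (TensorProduct.comm k H (Module.Dual k H)).toLinearMap
        (LinearMap.id : Module.Dual k H →ₗ[k] Module.Dual k H)) ∘ₗ
    TensorProduct.map (LinearMap.id : H →ₗ[k] H)
      (TensorProduct.map (adW b)
        (LinearMap.id : Module.Dual k H →ₗ[k] Module.Dual k H)) ∘ₗ
    TensorProduct.map (LinearMap.id : H →ₗ[k] H)
      (TensorProduct.assoc k H (Module.Dual k H) (Module.Dual k H)).symm.toLinearMap ∘ₗ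
    (TensorProduct.assoc k H H (Module.Dual k H ⊗[k] Module.Dual k H)).toLinearMap ∘ₗ
    TensorProduct.map (Coalgebra.comul (R := k) (A := H)) Δhat

variable (k H)

/-- The canonical projection `π̂ : D_H → H*`, `π̂(f ⊗ x) = ε(f) x`. -/
def piHatD : H ⊗[k] Module.Dual k H →ₗ[k] Module.Dual k H :=
  (TensorProduct.lid k (Module.Dual k H)).toLinearMap ∘ₗ
    TensorProduct.map (Coalgebra.counit (R := k) (A := H))
      (LinearMap.id : Module.Dual k H →ₗ[k] Module.Dual k H)


section Aux

variable {k H : Type*} [Field k] [Ring H] [HopfAlgebra k H]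

lemma piHatD_tmul (f : H) (x : Module.Dual k H) :
    piHatD k H (f ⊗ₜ[k] x) = Coalgebra.counit (R := k) f • x := by
  simp [piHatD]

lemma convL_apply' (s : Module.Dual k H ⊗[k] Module.Dual k H) (a : H) :
    convL k H s a = TensorProduct.dualDistrib k H H s (Coalgebra.comul (R := k) a) := by
  simp [convL]

lemma convL_counit_left (x : Module.Dual k H) :
    convL k H ((Coalgebra.counit (R := k) (A := H)) ⊗ₜ[k] x) = x := by
  ext a
  have aux : ∀ t : H ⊗[k] H,
      TensorProduct.dualDistrib k H H ((Coalgebra.counit (R := k) (A := H)) ⊗ₜ[k] x) t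
        = x ((TensorProduct.lid k H)
            ((Coalgebra.counit (R := k) (A := H)).rTensor H t)) := by
    intro t
    induction t using TensorProduct.induction_on with
    | zero => simp
    | tmul f g => simp
    | add u v hu hv => simp [hu, hv]
  rw [convL_apply', aux, Coalgebra.rTensor_counit_comul]
  simp

lemma convL_counit_right (x : Module.Dual k H) :
    convL k H (x ⊗ₜ[k] (Coalgebra.counit (R := k) (A := H))) = x := by
  ext a
  have aux : ∀ t : H ⊗[k] H,
      TensorProduct.dualDistrib k H H (x ⊗ₜ[k] (Coalgebra.counit (R := k) (A := H))) t
        = x ((TensorProduct.rid k H)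
            ((Coalgebra.counit (R := k) (A := H)).lTensor H t)) := by
    intro t
    induction t using TensorProduct.induction_on with
    | zero => simp
    | tmul f g => simp [mul_comm]
    | add u v hu hv => simp [hu, hv]
  rw [convL_apply', aux, Coalgebra.lTensor_counit_comul]
  simp

lemma counit_antipode (a : H) :
    Coalgebra.counit (R := k) (HopfAlgebra.antipode (R := k) a)
      = Coalgebra.counit (R := k) a := by
  have aux : ∀ t : H ⊗[k] H,
      TensorProduct.dualDistrib k H H ((Coalgebra.counit (R := k) (A := H)) ⊗ₜ[k]
          ((Coalgebra.counit (R := k) (A := H)) ∘ₗ HopfAlgebra.antipode (R := k))) t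
        = Coalgebra.counit (R := k)
            (LinearMap.mul' k H ((HopfAlgebra.antipode (R := k) (A := H)).lTensor H t)) := by
    intro t
    induction t using TensorProduct.induction_on with
    | zero => simp
    | tmul f g => simp [Bialgebra.counit_mul]
    | add u v hu hv => simp only [map_add, hu, hv]
  have h := congrFun (congrArg (DFunLike.coe) (convL_counit_left
      ((Coalgebra.counit (R := k) (A := H)) ∘ₗ HopfAlgebra.antipode (R := k)))) a
  rw [convL_apply', aux, HopfAlgebra.mul_antipode_lTensor_comul_apply] at h
  simp only [LinearMap.coe_comp, Function.comp_apply] at h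
  rw [← h, Algebra.algebraMap_eq_smul_one, map_smul, Bialgebra.counit_one, smul_eq_mul, mul_one]

lemma piHatD_wElem {n : ℕ} (b : Module.Basis (Fin n) k H) :
    piHatD k H (wElem b) = Coalgebra.counit (R := k) (A := H) := by
  ext a
  rw [wElem, map_sum]
  simp only [piHatD_tmul, LinearMap.sum_apply, LinearMap.smul_apply, Module.Basis.coord_apply,
    smul_eq_mul]
  conv_rhs => rw [← b.sum_repr a, map_sum]
  simp [mul_comm]

lemma piHatD_wElemInv {n : ℕ} (b : Module.Basis (Fin n) k H) :
    piHatD k H (wElemInv b) = Coalgebra.counit (R := k) (A := H) := by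
  ext a
  rw [wElemInv, map_sum]
  simp only [piHatD_tmul, LinearMap.sum_apply, LinearMap.smul_apply, Module.Basis.coord_apply,
    smul_eq_mul, counit_antipode]
  conv_rhs => rw [← b.sum_repr a, map_sum]
  simp [mul_comm]

lemma mulD_tmul (f g : H) (x y : Module.Dual k H) :
    mulD k H ((f ⊗ₜ[k] x) ⊗ₜ[k] (g ⊗ₜ[k] y)) = (f * g) ⊗ₜ[k] convL k H (x ⊗ₜ[k] y) := by
  simp [mulD, TensorProduct.tensorTensorTensorComm_tmul, LinearMap.mul'_apply]

lemma piHatD_mulD (z z' : H ⊗[k] Module.Dual k H) :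
    piHatD k H (mulD k H (z ⊗ₜ[k] z'))
      = convL k H (piHatD k H z ⊗ₜ[k] piHatD k H z') := by
  induction z using TensorProduct.induction_on with
  | zero => simp [TensorProduct.zero_tmul]
  | add u v hu hv => simp [TensorProduct.add_tmul, hu, hv]
  | tmul f x =>
    induction z' using TensorProduct.induction_on with
    | zero => simp [TensorProduct.tmul_zero]
    | add u v hu hv => simp [TensorProduct.tmul_add, hu, hv]
    | tmul g y =>
      rw [mulD_tmul, piHatD_tmul, piHatD_tmul, piHatD_tmul, Bialgebra.counit_mul]
      simp only [TensorProduct.tmul_smul, map_smul, mul_smul,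
        smul_comm (Coalgebra.counit (R := k) f) (Coalgebra.counit (R := k) g)]
      simp only [← TensorProduct.smul_tmul', map_smul]

lemma piHatD_adW {n : ℕ} (b : Module.Basis (Fin n) k H) (z : H ⊗[k] Module.Dual k H) :
    piHatD k H (adW b z) = piHatD k H z := by
  have hz : adW b z = mulD k H (wElem b ⊗ₜ[k] mulD k H (z ⊗ₜ[k] wElemInv b)) := rfl
  rw [hz, piHatD_mulD, piHatD_mulD, piHatD_wElem, piHatD_wElemInv,
    convL_counit_right, convL_counit_left]

end Aux

set_option maxHeartbeats 1600000
set_option synthInstance.maxHeartbeats 400000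

/-- The canonical projection `π̂ : D_H → H*`, `π̂(f ⊗ x) = ε(f) x`, is a
bialgebra homomorphism onto `(H*)^cop`: it is a unital algebra homomorphism from the
tensor product algebra `D_H = H ⊗ H*` to the convolution algebra `H*` (whose unit is `ε`)
and satisfies `(π̂ ⊗ π̂) ∘ Δ_D = Δ̂ ∘ π̂` and `ε̂ ∘ π̂ = ε_D`, where `ε̂(x) = x(1)`.
Here `Δ̂` is the comultiplication of `(H*)^cop`, characterized by `Δ̂(x)(a ⊗ b) = x(ba)`. -/
theorem drinfeld_codouble_projection_second_factor
    {k H : Type*} [Field k] [Ring H] [HopfAlgebra k H] {n : ℕ} (b : Module.Basis (Fin n) k H)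
    (Δhat : Module.Dual k H →ₗ[k] Module.Dual k H ⊗[k] Module.Dual k H)
    (hΔhat : ∀ (x : Module.Dual k H) (a c : H),
      TensorProduct.dualDistrib k H H (Δhat x) (a ⊗ₜ[k] c) = x (c * a)) :
    (∀ z z' : H ⊗[k] Module.Dual k H,
      piHatD k H (mulD k H (z ⊗ₜ[k] z'))
        = convL k H (piHatD k H z ⊗ₜ[k] piHatD k H z')) ∧
    (piHatD k H (oneD k H) = Coalgebra.counit (R := k) (A := H)) ∧
    (TensorProduct.map (piHatD k H) (piHatD k H) ∘ₗ deltaD b Δhat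
      = Δhat ∘ₗ piHatD k H) ∧
    (∀ z : H ⊗[k] Module.Dual k H, piHatD k H z (1 : H) = epsD k H z) := by
  refine ⟨piHatD_mulD, ?_, ?_, ?_⟩
  · rw [oneD, piHatD_tmul, Bialgebra.counit_one, one_smul]
  · refine TensorProduct.ext' fun f x => ?_
    have sub : ∀ (f : H) (y : Module.Dual k H) (u : H ⊗[k] Module.Dual k H),
        (TensorProduct.map (piHatD k H) (piHatD k H))
            ((TensorProduct.assoc k H (Module.Dual k H) (H ⊗[k] Module.Dual k H)).symm
              ((TensorProduct.map (LinearMap.id : H →ₗ[k] H)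
                  (TensorProduct.assoc k (Module.Dual k H) H (Module.Dual k H)).toLinearMap)
                ((TensorProduct.map (LinearMap.id : H →ₗ[k] H)
                    (TensorProduct.map (TensorProduct.comm k H (Module.Dual k H)).toLinearMap
                      (LinearMap.id : Module.Dual k H →ₗ[k] Module.Dual k H)))
                  (f ⊗ₜ[k] (u ⊗ₜ[k] y)))))
          = Coalgebra.counit (R := k) f • (piHatD k H u ⊗ₜ[k] y) := by
      intro f y u
      induction u using TensorProduct.induction_on with
      | zero => simp [TensorProduct.tmul_zero, TensorProduct.zero_tmul]
      | tmul h z =>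
        simp only [TensorProduct.map_tmul, LinearMap.id_coe, id_eq, LinearEquiv.coe_coe,
          TensorProduct.comm_tmul, TensorProduct.assoc_tmul, TensorProduct.assoc_symm_tmul,
          piHatD_tmul]
        simp only [TensorProduct.smul_tmul', TensorProduct.tmul_smul]
        rw [smul_comm]
      | add u v hu hv =>
        simp only [TensorProduct.add_tmul, TensorProduct.tmul_add, map_add, hu, hv,
          TensorProduct.add_tmul, smul_add]
    have key : ∀ (t : H ⊗[k] H) (s : Module.Dual k H ⊗[k] Module.Dual k H),
        (TensorProduct.map (piHatD k H) (piHatD k H))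
            ((TensorProduct.assoc k H (Module.Dual k H) (H ⊗[k] Module.Dual k H)).symm
              ((TensorProduct.map (LinearMap.id : H →ₗ[k] H)
                  (TensorProduct.assoc k (Module.Dual k H) H (Module.Dual k H)).toLinearMap)
                ((TensorProduct.map (LinearMap.id : H →ₗ[k] H)
                    (TensorProduct.map (TensorProduct.comm k H (Module.Dual k H)).toLinearMap
                      (LinearMap.id : Module.Dual k H →ₗ[k] Module.Dual k H)))
                  ((TensorProduct.map (LinearMap.id : H →ₗ[k] H)
                      (TensorProduct.map (adW b)
                        (LinearMap.id : Module.Dual k H →ₗ[k] Module.Dual k H)))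
                    ((TensorProduct.map (LinearMap.id : H →ₗ[k] H)
                        (TensorProduct.assoc k H (Module.Dual k H) (Module.Dual k H)).symm.toLinearMap)
                      ((TensorProduct.assoc k H H (Module.Dual k H ⊗[k] Module.Dual k H))
                        (t ⊗ₜ[k] s)))))))
          = LinearMap.mul' k k (TensorProduct.map (Coalgebra.counit (R := k) (A := H))
              (Coalgebra.counit (R := k) (A := H)) t) • s := by
      intro t s
      induction t using TensorProduct.induction_on with
      | zero => simp [TensorProduct.zero_tmul]
      | add u v hu hv =>
        simp only [TensorProduct.add_tmul, map_add, hu, hv, add_smul]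
      | tmul f g =>
        induction s using TensorProduct.induction_on with
        | zero => simp [TensorProduct.tmul_zero]
        | add u v hu hv =>
          simp only [TensorProduct.tmul_add, map_add, hu, hv, smul_add]
        | tmul x y =>
          rw [show (TensorProduct.assoc k H H (Module.Dual k H ⊗[k] Module.Dual k H))
              ((f ⊗ₜ[k] g) ⊗ₜ[k] (x ⊗ₜ[k] y)) = f ⊗ₜ[k] (g ⊗ₜ[k] (x ⊗ₜ[k] y)) from
            TensorProduct.assoc_tmul _ _ _]
          rw [show (TensorProduct.map (LinearMap.id (R := k) (M := H))
              (TensorProduct.assoc k H (Module.Dual k H) (Module.Dual k H)).symm.toLinearMap)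
              (f ⊗ₜ[k] (g ⊗ₜ[k] (x ⊗ₜ[k] y))) = f ⊗ₜ[k] ((g ⊗ₜ[k] x) ⊗ₜ[k] y) by
            simp [TensorProduct.assoc_symm_tmul]]
          rw [show (TensorProduct.map (LinearMap.id (R := k) (M := H))
              (TensorProduct.map (adW b) (LinearMap.id (R := k) (M := Module.Dual k H))))
              (f ⊗ₜ[k] ((g ⊗ₜ[k] x) ⊗ₜ[k] y)) = f ⊗ₜ[k] (adW b (g ⊗ₜ[k] x) ⊗ₜ[k] y) by
            simp]
          rw [sub, piHatD_adW, piHatD_tmul]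
          simp only [LinearMap.mul'_apply, TensorProduct.map_tmul]
          simp only [TensorProduct.smul_tmul', TensorProduct.tmul_smul, smul_smul]
    simp only [LinearMap.comp_apply, deltaD, LinearEquiv.coe_coe, TensorProduct.map_tmul]
    rw [key]
    have sc : LinearMap.mul' k k (TensorProduct.map (Coalgebra.counit (R := k) (A := H))
        (Coalgebra.counit (R := k) (A := H)) (Coalgebra.comul (R := k) f))
        = Coalgebra.counit (R := k) f := by
      have aux : ∀ t : H ⊗[k] H,
          LinearMap.mul' k k (TensorProduct.map (Coalgebra.counit (R := k) (A := H))
            (Coalgebra.counit (R := k) (A := H)) t)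
          = TensorProduct.dualDistrib k H H ((Coalgebra.counit (R := k) (A := H)) ⊗ₜ[k]
              (Coalgebra.counit (R := k) (A := H))) t := by
        intro t
        induction t using TensorProduct.induction_on with
        | zero => simp
        | tmul f g => simp
        | add u v hu hv => simp [hu, hv]
      have h := congrFun (congrArg (DFunLike.coe)
        (convL_counit_left (k := k) (H := H) (Coalgebra.counit (R := k) (A := H)))) f
      rw [convL_apply'] at h
      rw [aux, h]
    rw [sc, piHatD_tmul, map_smul]
  · intro z
    induction z using TensorProduct.induction_on with
    | zero => simp
    | tmul f x => simp [piHatD_tmul, epsD, LinearMap.mul'_apply]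
    | add u v hu hv => simp [hu, hv]

end
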